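/- Let λ_1,…,λ_{T-1} ∈ (0,∞) and define H_t := Σ_{i=1}^t ∏_{j=i}^{t-1} λ_j² (so H_1 = 1 and H_t = λ_{t-1}²·H_{t-1} + 1). Then for all T ∈ ℕ_+: Σ_{t=1}^T H_t^{-1/2}·(∏_{i=t}^{T-1} λ_i) ≤ 2·√H_T. -/

import Mathlib

open scoped BigOperators

lemma key_sqrt_ineq (x : ℝ) (hx : 1 ≤ x) :
    2 * Real.sqrt (x - 1) + (Real.sqrt x)⁻¹ ≤ 2 * Real.sqrt x := by
  set a := Real.sqrt x with ha
  set b := Real.sqrt (x - 1) with hb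
  have hxpos : 0 < x := by linarith
  have hapos : 0 < a := Real.sqrt_pos.mpr hxpos
  have hbnn : 0 ≤ b := Real.sqrt_nonneg _
  have ha2 : a ^ 2 = x := Real.sq_sqrt hxpos.le
  have hb2 : b ^ 2 = x - 1 := Real.sq_sqrt (by linarith)
  have key : 2 * a * b + 1 ≤ 2 * a ^ 2 := by nlinarith [sq_nonneg (a - b)]
  have h2 : (2 * a - 2 * b - a⁻¹) * a = 2 * a ^ 2 - 2 * a * b - 1 := by
    field_simp
  nlinarith [h2, key, hapos]

theorem discounted_stepsize_sum_bound
    (T : ℕ) (hT : 1 ≤ T)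
    (lam : ℕ → ℝ) (hlam : ∀ i, 0 < lam i)
    (H : ℕ → ℝ)
    (hH : ∀ t, H t = ∑ i ∈ Finset.Icc 1 t, ∏ j ∈ Finset.Icc i (t-1), (lam j)^2) :
    ∑ t ∈ Finset.Icc 1 T, (Real.sqrt (H t))⁻¹ * (∏ i ∈ Finset.Icc t (T-1), lam i)
      ≤ 2 * Real.sqrt (H T) := by
  have Hge1 : ∀ t, 1 ≤ t → 1 ≤ H t := by
    intro t ht
    rw [hH t]
    have hterm : ∏ j ∈ Finset.Icc t (t-1), (lam j)^2 = 1 := by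
      rw [Finset.Icc_eq_empty (by omega)]; simp
    calc (1 : ℝ) = ∏ j ∈ Finset.Icc t (t-1), (lam j)^2 := hterm.symm
      _ ≤ _ := Finset.single_le_sum
          (f := fun i => ∏ j ∈ Finset.Icc i (t-1), (lam j)^2)
          (fun i _ => Finset.prod_nonneg fun j _ => sq_nonneg _)
          (Finset.mem_Icc.mpr ⟨ht, le_refl t⟩)
  induction T, hT using Nat.le_induction with
  | base =>
      have h1 : H 1 = 1 := by rw [hH]; simp
      simp [h1, Real.sqrt_one]
  | succ T hT ih =>
      obtain ⟨k, rfl⟩ : ∃ k, T = k + 1 := ⟨T - 1, by omega⟩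
      set lamT := lam (k + 1) with hlT
      have hlTpos : 0 < lamT := hlam _
      -- recurrence for H
      have hHrec : H (k + 2) = lamT ^ 2 * H (k + 1) + 1 := by
        rw [hH (k + 2), hH (k + 1)]
        rw [show k + 2 - 1 = k + 1 from rfl, show k + 1 - 1 = k from rfl,
          Finset.sum_Icc_succ_top (by omega : 1 ≤ k + 2)]
        rw [Finset.Icc_eq_empty (by omega : ¬ (k + 2 ≤ k + 1)), Finset.prod_empty,
          Finset.mul_sum]
        congr 1
        apply Finset.sum_congr rfl
        intro i hi
        have hik : i ≤ k + 1 := (Finset.mem_Icc.mp hi).2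
        rw [Finset.prod_Icc_succ_top hik]
        ring
      -- split the sum
      have hsum : ∑ t ∈ Finset.Icc 1 (k + 2), (Real.sqrt (H t))⁻¹ *
            (∏ i ∈ Finset.Icc t (k + 2 - 1), lam i)
          = (∑ t ∈ Finset.Icc 1 (k + 1), (Real.sqrt (H t))⁻¹ *
              (∏ i ∈ Finset.Icc t (k + 1 - 1), lam i)) * lamT
            + (Real.sqrt (H (k + 2)))⁻¹ := by
        rw [show k + 2 - 1 = k + 1 from rfl, show k + 1 - 1 = k from rfl,
          Finset.sum_Icc_succ_top (by omega : 1 ≤ k + 2)]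
        rw [Finset.Icc_eq_empty (by omega : ¬ (k + 2 ≤ k + 1)), Finset.prod_empty,
          mul_one, Finset.sum_mul]
        congr 1
        apply Finset.sum_congr rfl
        intro i hi
        have hik : i ≤ k + 1 := (Finset.mem_Icc.mp hi).2
        rw [Finset.prod_Icc_succ_top hik]
        ring
      rw [hsum]
      have hHk1 : 1 ≤ H (k + 1) := Hge1 _ (by omega)
      have hHk2 : 1 ≤ H (k + 2) := Hge1 _ (by omega)
      have hs1 : Real.sqrt (H (k + 2) - 1) = lamT * Real.sqrt (H (k + 1)) := by
        rw [hHrec]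
        rw [show lamT ^ 2 * H (k + 1) + 1 - 1 = lamT ^ 2 * H (k + 1) by ring]
        rw [Real.sqrt_mul (sq_nonneg _), Real.sqrt_sq hlTpos.le]
      have step1 : (∑ t ∈ Finset.Icc 1 (k + 1), (Real.sqrt (H t))⁻¹ *
              (∏ i ∈ Finset.Icc t (k + 1 - 1), lam i)) * lamT
          ≤ 2 * Real.sqrt (H (k + 2) - 1) := by
        rw [hs1]
        calc _ ≤ (2 * Real.sqrt (H (k + 1))) * lamT :=
              mul_le_mul_of_nonneg_right ih hlTpos.le
          _ = 2 * (lamT * Real.sqrt (H (k + 1))) := by ring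
      have := key_sqrt_ineq (H (k + 2)) hHk2
      linarith
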